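/- Let K ∈ N_0 and let P̄_K⁺ = {λ ∈ P⁺ : λ(c) = K, λ(d) = 0}. The orbit sums m_λ = Σ_{μ ∈ Wλ} e^μ, for λ ∈ P̄_K⁺, form a basis of the level-K space of symmetric theta functions A_K^W as a vector space over the field A_0^W = { Σ_{n ≤ n_0} a_n e^{nδ} }. -/

import Mathlib

open scoped Classical

/-- The weight lattice `P ≅ ℤ³` via `λ ↦ (λ(h₀), λ(h₁), λ(d))`; simple reflection
`s_{α₀}(λ) = λ − λ(h₀)α₀`, `α₀ = (2,−2,1)`. -/
def s0z : ℤ × ℤ × ℤ → ℤ × ℤ × ℤ := fun p => (-p.1, p.2.1 + 2 * p.1, p.2.2 - p.1)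

/-- Simple reflection `s_{α₁}(λ) = λ − λ(h₁)α₁`, `α₁ = (−2,2,0)`. -/
def s1z : ℤ × ℤ × ℤ → ℤ × ℤ × ℤ := fun p => (p.1 + 2 * p.2.1, -p.2.1, p.2.2)

lemma s0z_involutive : Function.Involutive s0z := by
  rintro ⟨x, y, z⟩; simp only [s0z, Prod.mk.injEq]; refine ⟨by ring, by ring, by ring⟩

lemma s1z_involutive : Function.Involutive s1z := by
  rintro ⟨x, y, z⟩; simp only [s1z, Prod.mk.injEq]; refine ⟨by ring, by ring, by simp⟩

/-- The affine Weyl group of `sl2`-hat, acting on the weight lattice. -/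
def Wz : Subgroup (Equiv.Perm (ℤ × ℤ × ℤ)) :=
  Subgroup.closure {s0z_involutive.toPerm, s1z_involutive.toPerm}

/-- Twice the `ρ`-pairing: `2(λ,ρ) = λ(h₁) + 4λ(d)` for `λ = (λ(h₀), λ(h₁), λ(d))`,
where `ρ = ϖ₀ + ϖ₁`. -/
def rhoPair (v : ℤ × ℤ × ℤ) : ℤ := v.2.1 + 4 * v.2.2

/-- Membership in the completion `C̄[P_K]`: a formal sum `Σ_{λ∈P_K} f(λ) eᵠ` supported
on level `K`, such that for every `N ∈ ℤ` only finitely many `λ` in the support have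
`(λ,ρ) ≥ N`. -/
def InCbar (K : ℤ) (f : ℤ × ℤ × ℤ → ℂ) : Prop :=
  (∀ v, f v ≠ 0 → v.1 + v.2.1 = K) ∧
  ∀ N : ℤ, {v : ℤ × ℤ × ℤ | f v ≠ 0 ∧ N ≤ rhoPair v}.Finite

/-- Membership in the Looijenga space `A_K = ⋂_{w∈W} w(C̄[P_K])`. -/
def InA (K : ℤ) (f : ℤ × ℤ × ℤ → ℂ) : Prop :=
  ∀ w ∈ Wz, InCbar K (fun v => f (w v))

/-- Membership in `A_K^W`: `W`-invariant elements of `A_K` (invariance under the two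
generating reflections suffices). -/
def InAW (K : ℤ) (f : ℤ × ℤ × ℤ → ℂ) : Prop :=
  InA K f ∧ (∀ v, f (s0z v) = f v) ∧ (∀ v, f (s1z v) = f v)

/-- The convolution product of formal sums: `(f⋆g)(v) = Σ_u f(u)g(v-u)`. -/
noncomputable def conv (f g : ℤ × ℤ × ℤ → ℂ) : ℤ × ℤ × ℤ → ℂ :=
  fun v => ∑ᶠ u : ℤ × ℤ × ℤ, f u * g (v - u)

/-- The orbit sum `m_λ = Σ_{μ ∈ Wλ} e^μ`, as the indicator function of the `W`-orbit
of `λ`. -/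
noncomputable def orbitSum (lam : ℤ × ℤ × ℤ) : ℤ × ℤ × ℤ → ℂ :=
  fun v => if ∃ w ∈ Wz, w lam = v then 1 else 0

section Aux

/-- The two generating reflections as permutations. -/
noncomputable def s0P : Equiv.Perm (ℤ × ℤ × ℤ) := s0z_involutive.toPerm
noncomputable def s1P : Equiv.Perm (ℤ × ℤ × ℤ) := s1z_involutive.toPerm

@[simp] lemma s0P_apply (v : ℤ × ℤ × ℤ) : s0P v = s0z v := rfl
@[simp] lemma s1P_apply (v : ℤ × ℤ × ℤ) : s1P v = s1z v := rfl

lemma s0P_mem : s0P ∈ Wz := Subgroup.subset_closure (Set.mem_insert _ _)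
lemma s1P_mem : s1P ∈ Wz := Subgroup.subset_closure (Set.mem_insert_iff.mpr (Or.inr rfl))

/-- Functions invariant under `w` form a subgroup; used for closure arguments. -/
def invSubgroup {α : Sort*} (f : ℤ × ℤ × ℤ → α) : Subgroup (Equiv.Perm (ℤ × ℤ × ℤ)) where
  carrier := {w | ∀ v, f (w v) = f v}
  one_mem' := fun v => rfl
  mul_mem' := by
    intro a b ha hb v
    rw [Equiv.Perm.mul_apply, ha, hb]
  inv_mem' := by
    intro a ha v
    have := ha (a⁻¹ v)
    rw [show a (a⁻¹ v) = v from Equiv.apply_symm_apply a v] at this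
    exact this.symm

lemma wz_invariant {α : Sort*} {f : ℤ × ℤ × ℤ → α}
    (h0 : ∀ v, f (s0z v) = f v) (h1 : ∀ v, f (s1z v) = f v)
    {w : Equiv.Perm (ℤ × ℤ × ℤ)} (hw : w ∈ Wz) : ∀ v, f (w v) = f v := by
  have hle : Wz ≤ invSubgroup f := by
    rw [Wz, Subgroup.closure_le]
    rintro x hx
    rcases hx with rfl | hx
    · intro v; simpa using h0 v
    · rcases hx with rfl
      intro v; simpa using h1 v
  exact hle hw

noncomputable def tP : Equiv.Perm (ℤ × ℤ × ℤ) := s0P * s1P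

lemma tP_mem : tP ∈ Wz := mul_mem s0P_mem s1P_mem

lemma tP_apply (v : ℤ × ℤ × ℤ) :
    tP v = (-v.1 - 2*v.2.1, 2*v.1 + 3*v.2.1, v.2.2 - v.1 - 2*v.2.1) := by
  rcases v with ⟨x, y, z⟩
  show s0P (s1P (x, y, z)) = _
  simp only [s0P_apply, s1P_apply, s0z, s1z, Prod.mk.injEq]
  refine ⟨by ring, by ring, by ring⟩

lemma tP_inv_apply (v : ℤ × ℤ × ℤ) :
    tP⁻¹ v = (3*v.1 + 2*v.2.1, -2*v.1 - v.2.1, v.2.2 - v.1) := by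
  have h : tP (3*v.1 + 2*v.2.1, -2*v.1 - v.2.1, v.2.2 - v.1) = v := by
    rw [tP_apply]
    rcases v with ⟨x, y, z⟩
    simp only [Prod.mk.injEq]
    refine ⟨by ring, by ring, by ring⟩
  conv_lhs => rw [← h]
  exact Equiv.symm_apply_apply _ _

lemma tP_zpow_apply (m : ℤ) : ∀ v : ℤ × ℤ × ℤ,
    (tP ^ m) v = (v.1 - 2*m*(v.1 + v.2.1), v.2.1 + 2*m*(v.1 + v.2.1),
      v.2.2 - m*v.2.1 - m^2*(v.1 + v.2.1)) := by
  induction m using Int.induction_on with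
  | zero =>
    intro v
    rcases v with ⟨x, y, z⟩
    simp only [zpow_zero, Equiv.Perm.coe_one, id_eq, Prod.mk.injEq]
    refine ⟨by ring, by ring, by ring⟩
  | succ m ih =>
    intro v
    have h : tP ^ ((m : ℤ) + 1) = tP ^ (m : ℤ) * tP := zpow_add_one tP m
    rw [h, Equiv.Perm.mul_apply, ih, tP_apply]
    rcases v with ⟨x, y, z⟩
    simp only [Prod.mk.injEq]
    refine ⟨by ring, by ring, by ring⟩
  | pred m ih =>
    intro v
    have h : tP ^ (-(m : ℤ) - 1) = tP ^ (-(m : ℤ)) * tP⁻¹ := zpow_sub_one tP (-m)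
    rw [h, Equiv.Perm.mul_apply, ih, tP_inv_apply]
    rcases v with ⟨x, y, z⟩
    simp only [Prod.mk.injEq]
    refine ⟨by ring, by ring, by ring⟩

/-- Explicit description of the `W`-orbit of `(K-j, j, c)`. -/
def inS (K j c : ℤ) (v : ℤ × ℤ × ℤ) : Prop :=
  ∃ m : ℤ,
    (v.1 = K - j - 2*m*K ∧ v.2.1 = j + 2*m*K ∧ v.2.2 = c - m*j - m^2*K) ∨
    (v.1 = K + j - 2*m*K ∧ v.2.1 = -j + 2*m*K ∧ v.2.2 = c + m*j - m^2*K)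

lemma inS_s0 {K j c : ℤ} {v : ℤ × ℤ × ℤ} (h : inS K j c v) : inS K j c (s0z v) := by
  obtain ⟨m, h | h⟩ := h
  · exact ⟨1 - m, Or.inr ⟨by simp only [s0z]; linear_combination -h.1,
      by simp only [s0z]; linear_combination h.2.1 + 2*h.1,
      by simp only [s0z]; linear_combination h.2.2 - h.1⟩⟩
  · exact ⟨1 - m, Or.inl ⟨by simp only [s0z]; linear_combination -h.1,
      by simp only [s0z]; linear_combination h.2.1 + 2*h.1,
      by simp only [s0z]; linear_combination h.2.2 - h.1⟩⟩

lemma inS_s1 {K j c : ℤ} {v : ℤ × ℤ × ℤ} (h : inS K j c v) : inS K j c (s1z v) := by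
  obtain ⟨m, h | h⟩ := h
  · exact ⟨-m, Or.inr ⟨by simp only [s1z]; linear_combination h.1 + 2*h.2.1,
      by simp only [s1z]; linear_combination -h.2.1,
      by simp only [s1z]; linear_combination h.2.2⟩⟩
  · exact ⟨-m, Or.inl ⟨by simp only [s1z]; linear_combination h.1 + 2*h.2.1,
      by simp only [s1z]; linear_combination -h.2.1,
      by simp only [s1z]; linear_combination h.2.2⟩⟩

lemma inS_s0_iff {K j c : ℤ} (v : ℤ × ℤ × ℤ) : inS K j c (s0z v) = inS K j c v := by
  apply propext
  constructor
  · intro h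
    have := inS_s0 h
    rwa [s0z_involutive v] at this
  · exact inS_s0

lemma inS_s1_iff {K j c : ℤ} (v : ℤ × ℤ × ℤ) : inS K j c (s1z v) = inS K j c v := by
  apply propext
  constructor
  · intro h
    have := inS_s1 h
    rwa [s1z_involutive v] at this
  · exact inS_s1

lemma orbit_iff (K j c : ℤ) (v : ℤ × ℤ × ℤ) :
    (∃ w ∈ Wz, w ((K - j, j, c) : ℤ × ℤ × ℤ) = v) ↔ inS K j c v := by
  constructor
  · rintro ⟨w, hw, rfl⟩
    have base : inS K j c (K - j, j, c) := by
      unfold inS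
      exact ⟨0, Or.inl ⟨by ring, by ring, by ring⟩⟩
    have := wz_invariant (f := inS K j c) (fun v => inS_s0_iff v) (fun v => inS_s1_iff v) hw
      (K - j, j, c)
    rw [this]
    exact base
  · rintro ⟨m, h | h⟩
    · refine ⟨tP ^ m, zpow_mem tP_mem m, ?_⟩
      rw [tP_zpow_apply]
      rcases v with ⟨x, y, z⟩
      simp only [Prod.mk.injEq]
      obtain ⟨h1, h2, h3⟩ := h
      refine ⟨by linear_combination -h1, by linear_combination -h2, by linear_combination -h3⟩
    · refine ⟨tP ^ m * s1P, mul_mem (zpow_mem tP_mem m) s1P_mem, ?_⟩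
      rw [Equiv.Perm.mul_apply]
      have hs : s1P ((K - j, j, c) : ℤ × ℤ × ℤ) = (K + j, -j, c) := by
        simp only [s1P_apply, s1z, Prod.mk.injEq]
        exact ⟨by ring, trivial⟩
      rw [hs, tP_zpow_apply]
      rcases v with ⟨x, y, z⟩
      simp only [Prod.mk.injEq]
      obtain ⟨h1, h2, h3⟩ := h
      refine ⟨by linear_combination -h1, by linear_combination -h2, by linear_combination -h3⟩

lemma inS_level {K j c : ℤ} {v : ℤ × ℤ × ℤ} (h : inS K j c v) : v.1 + v.2.1 = K := by
  obtain ⟨m, h | h⟩ := h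
  · linear_combination h.1 + h.2.1
  · linear_combination h.1 + h.2.1

lemma inS_shift (K j t : ℤ) (v : ℤ × ℤ × ℤ) :
    inS K j 0 (v - (0, 0, t)) ↔ inS K j t v := by
  have e1 : (v - ((0 : ℤ), (0 : ℤ), t)).1 = v.1 := by
    rcases v with ⟨x, y, z⟩; simp [Prod.sub_def]
  have e2 : (v - ((0 : ℤ), (0 : ℤ), t)).2.1 = v.2.1 := by
    rcases v with ⟨x, y, z⟩; simp [Prod.sub_def]
  have e3 : (v - ((0 : ℤ), (0 : ℤ), t)).2.2 = v.2.2 - t := by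
    rcases v with ⟨x, y, z⟩; simp [Prod.sub_def]
  unfold inS
  rw [e1, e2, e3]
  constructor
  · rintro ⟨m, h | h⟩
    · exact ⟨m, Or.inl ⟨h.1, h.2.1, by linear_combination h.2.2⟩⟩
    · exact ⟨m, Or.inr ⟨h.1, h.2.1, by linear_combination h.2.2⟩⟩
  · rintro ⟨m, h | h⟩
    · exact ⟨m, Or.inl ⟨h.1, h.2.1, by linear_combination h.2.2⟩⟩
    · exact ⟨m, Or.inr ⟨h.1, h.2.1, by linear_combination h.2.2⟩⟩

end Aux
section Arith

lemma eq_of_bounded0 {n K a : ℤ} (hK : 0 < K) (h : a = 2*n*K) (h1 : -K ≤ a) (h2 : a ≤ K) :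
    n = 0 := by
  by_contra hn
  rcases lt_or_gt_of_ne hn with h' | h'
  · have hn1 : n ≤ -1 := by omega
    have := mul_le_mul_of_nonneg_right hn1 hK.le
    linarith
  · have hn1 : 1 ≤ n := by omega
    have := mul_le_mul_of_nonneg_right hn1 hK.le
    linarith

lemma eq_of_bounded01 {n K a : ℤ} (hK : 0 < K) (h : a = 2*n*K) (h1 : 0 ≤ a) (h2 : a ≤ 2*K) :
    n = 0 ∨ n = 1 := by
  by_contra hn
  push_neg at hn
  have hcase : n ≤ -1 ∨ 2 ≤ n := by omega
  rcases hcase with hn1 | hn1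
  · have := mul_le_mul_of_nonneg_right hn1 hK.le
    linarith
  · have := mul_le_mul_of_nonneg_right hn1 hK.le
    linarith

lemma inS_unique {K j j' l l' : ℤ} {v : ℤ × ℤ × ℤ}
    (hj0 : 0 ≤ j) (hjK : j ≤ K) (hj0' : 0 ≤ j') (hjK' : j' ≤ K)
    (h : inS K j l v) (h' : inS K j' l' v) : j = j' ∧ l = l' := by
  have hK0 : 0 ≤ K := le_trans hj0 hjK
  obtain ⟨m, h | h⟩ := h <;> obtain ⟨m', h' | h'⟩ := h'
  · -- AA
    have hy : j - j' = 2*(m' - m)*K := by linear_combination h'.2.1 - h.2.1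
    rcases hK0.lt_or_eq with hK | hK
    · have hm := eq_of_bounded0 hK hy (by linarith) (by linarith)
      have hm' : m' = m := by omega
      subst hm'
      have hj : j = j' := by linear_combination hy
      subst hj
      exact ⟨rfl, by linear_combination h'.2.2 - h.2.2⟩
    · have hj : j = 0 := by omega
      have hj' : j' = 0 := by omega
      subst hj; subst hj'
      rw [← hK] at h h'
      exact ⟨rfl, by linear_combination h'.2.2 - h.2.2⟩
  · -- AB
    have hy : j + j' = 2*(m' - m)*K := by linear_combination h'.2.1 - h.2.1
    rcases hK0.lt_or_eq with hK | hK
    · rcases eq_of_bounded01 hK hy (by linarith) (by linarith) with hm | hm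
      · have hm' : m' = m := by omega
        subst hm'
        have hjj : j + j' = 0 := by linear_combination hy
        have hj : j = 0 := by omega
        have hj' : j' = 0 := by omega
        subst hj; subst hj'
        exact ⟨rfl, by linear_combination h'.2.2 - h.2.2⟩
      · have hm' : m' = m + 1 := by omega
        subst hm'
        have hjj : j + j' = 2*K := by linear_combination hy
        have hj : j = K := by omega
        have hj' : j' = K := by omega
        subst hj
        refine ⟨by omega, by linear_combination h'.2.2 - h.2.2 + (m+1) * hj'⟩
    · have hj : j = 0 := by omega
      have hj' : j' = 0 := by omega
      subst hj; subst hj'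
      rw [← hK] at h h'
      exact ⟨rfl, by linear_combination h'.2.2 - h.2.2⟩
  · -- BA
    have hy : j + j' = 2*(m - m')*K := by linear_combination h.2.1 - h'.2.1
    rcases hK0.lt_or_eq with hK | hK
    · rcases eq_of_bounded01 hK hy (by linarith) (by linarith) with hm | hm
      · have hm' : m = m' := by omega
        subst hm'
        have hjj : j + j' = 0 := by linear_combination hy
        have hj : j = 0 := by omega
        have hj' : j' = 0 := by omega
        subst hj; subst hj'
        exact ⟨rfl, by linear_combination h'.2.2 - h.2.2⟩
      · have hm' : m = m' + 1 := by omega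
        subst hm'
        have hjj : j + j' = 2*K := by linear_combination hy
        have hj : j = K := by omega
        have hj' : j' = K := by omega
        subst hj
        refine ⟨by omega, by linear_combination h'.2.2 - h.2.2 - m' * hj'⟩
    · have hj : j = 0 := by omega
      have hj' : j' = 0 := by omega
      subst hj; subst hj'
      rw [← hK] at h h'
      exact ⟨rfl, by linear_combination h'.2.2 - h.2.2⟩
  · -- BB
    have hy : j - j' = 2*(m - m')*K := by linear_combination h.2.1 - h'.2.1
    rcases hK0.lt_or_eq with hK | hK
    · have hm := eq_of_bounded0 hK hy (by linarith) (by linarith)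
      have hm' : m = m' := by omega
      subst hm'
      have hj : j = j' := by linear_combination hy
      subst hj
      exact ⟨rfl, by linear_combination h'.2.2 - h.2.2⟩
    · have hj : j = 0 := by omega
      have hj' : j' = 0 := by omega
      subst hj; subst hj'
      rw [← hK] at h h'
      exact ⟨rfl, by linear_combination h'.2.2 - h.2.2⟩

lemma classify {K : ℤ} (hK : 0 < K) (v : ℤ × ℤ × ℤ) (hv : v.1 + v.2.1 = K) :
    ∃ j l : ℤ, 0 ≤ j ∧ j ≤ K ∧ inS K j l v := by
  have h2K : 0 < 2*K := by linarith
  have hr0 : 0 ≤ v.2.1 % (2*K) := Int.emod_nonneg _ (ne_of_gt h2K)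
  have hr2 : v.2.1 % (2*K) < 2*K := Int.emod_lt_of_pos _ h2K
  have hqr : 2*K * (v.2.1 / (2*K)) + v.2.1 % (2*K) = v.2.1 := Int.mul_ediv_add_emod _ _
  set q := v.2.1 / (2*K) with hq
  set r := v.2.1 % (2*K) with hr
  by_cases hcase : r ≤ K
  · refine ⟨r, v.2.2 + q*r + q^2*K, hr0, hcase, ⟨q, Or.inl ⟨?_, ?_, ?_⟩⟩⟩
    · linear_combination hv + hqr
    · linear_combination -hqr
    · ring
  · refine ⟨2*K - r, v.2.2 - (q+1)*(2*K-r) + (q+1)^2*K, by linarith, by linarith,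
      ⟨q + 1, Or.inr ⟨?_, ?_, ?_⟩⟩⟩
    · linear_combination hv + hqr
    · linear_combination -hqr
    · ring

end Arith
section Conv

lemma InCbar_of_one {K : ℤ} {f : ℤ × ℤ × ℤ → ℂ} (h : InA K f) : InCbar K f := by
  have h1 := h 1 (one_mem _)
  have hfun : (fun v => f ((1 : Equiv.Perm (ℤ × ℤ × ℤ)) v)) = f := by
    funext u; simp
  rwa [hfun] at h1

lemma support_axis {c : ℤ × ℤ × ℤ → ℂ} (hc : InAW 0 c) {v : ℤ × ℤ × ℤ} (hne : c v ≠ 0) :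
    v.1 = 0 ∧ v.2.1 = 0 := by
  have h1 : InCbar 0 c := InCbar_of_one hc.1
  have hlev : v.1 + v.2.1 = 0 := h1.1 v hne
  by_cases hy : v.2.1 = 0
  · exact ⟨by omega, hy⟩
  · exfalso
    have key : ∀ m : ℤ, c ((tP ^ m) v) = c v := fun m =>
      wz_invariant hc.2.1 hc.2.2 (zpow_mem tP_mem m) v
    set e : ℕ → ℤ × ℤ × ℤ := fun n => (v.1, v.2.1, v.2.2 + (n : ℤ) * |v.2.1|) with he
    have hce : ∀ n : ℕ, c (e n) = c v := by
      intro n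
      set m : ℤ := if 0 < v.2.1 then -(n : ℤ) else (n : ℤ) with hm
      have : (tP ^ m) v = e n := by
        rw [tP_zpow_apply, hlev, he]
        simp only [mul_zero, sub_zero, add_zero]
        refine Prod.ext rfl (Prod.ext rfl ?_)
        simp only
        rcases lt_or_ge 0 v.2.1 with hpos | hle
        · rw [hm, if_pos hpos, abs_of_pos hpos]; ring
        · have hneg : v.2.1 < 0 := lt_of_le_of_ne hle hy
          rw [hm, if_neg (not_lt.mpr hle), abs_of_neg hneg]; ring
      rw [← this, key]
    have hinj : Function.Injective e := by
      intro n n' hnn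
      have h3 : v.2.2 + (n : ℤ) * |v.2.1| = v.2.2 + (n' : ℤ) * |v.2.1| := congrArg (Prod.snd ∘ Prod.snd) hnn
      have habs : (0:ℤ) < |v.2.1| := abs_pos.mpr hy
      have : (n : ℤ) = n' := by
        have := mul_right_cancel₀ (ne_of_gt habs) (by linarith : (n : ℤ) * |v.2.1| = (n' : ℤ) * |v.2.1|)
        exact this
      exact_mod_cast this
    have hmem : ∀ n : ℕ, e n ∈ {u : ℤ × ℤ × ℤ | c u ≠ 0 ∧ rhoPair v ≤ rhoPair u} := by
      intro n
      refine ⟨by rw [hce n]; exact hne, ?_⟩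
      have habs : (0:ℤ) ≤ (n : ℤ) * |v.2.1| := by positivity
      simp only [rhoPair, he]
      linarith
    exact (Set.infinite_of_injective_forall_mem hinj hmem) (h1.2 (rhoPair v))

lemma conv_eval_pos {K j l : ℤ} (hj0 : 0 ≤ j) (hjK : j ≤ K) {c : ℤ × ℤ × ℤ → ℂ}
    (hcsupp : ∀ u, c u ≠ 0 → u.1 = 0 ∧ u.2.1 = 0) {v : ℤ × ℤ × ℤ} (h : inS K j l v) :
    conv c (orbitSum (K - j, j, 0)) v = c (0, 0, l) := by
  unfold conv
  rw [finsum_eq_single _ ((0 : ℤ), (0 : ℤ), l)]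
  · have h1 : orbitSum (K - j, j, 0) (v - (0, 0, l)) = 1 := by
      unfold orbitSum
      rw [if_pos ((orbit_iff K j 0 _).mpr ((inS_shift K j l v).mpr h))]
    rw [h1, mul_one]
  · intro u hu
    by_cases h0 : c u = 0
    · rw [h0, zero_mul]
    · obtain ⟨hu1, hu2⟩ := hcsupp u h0
      have h2 : orbitSum (K - j, j, 0) (v - u) = 0 := by
        unfold orbitSum
        rw [if_neg]
        intro hcon
        have hS := (orbit_iff K j 0 _).mp hcon
        have hueq : u = ((0 : ℤ), (0 : ℤ), u.2.2) := by
          rcases u with ⟨a, b, t⟩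
          simp only at hu1 hu2
          rw [hu1, hu2]
        rw [hueq] at hS
        have ht := (inS_shift K j u.2.2 v).mp hS
        have := (inS_unique hj0 hjK hj0 hjK ht h).2
        apply hu
        rw [hueq, this]
      rw [h2, mul_zero]

lemma conv_eval_neg {K j : ℤ} (c : ℤ × ℤ × ℤ → ℂ)
    (hcsupp : ∀ u, c u ≠ 0 → u.1 = 0 ∧ u.2.1 = 0) {v : ℤ × ℤ × ℤ}
    (h : ∀ l, ¬ inS K j l v) :
    conv c (orbitSum (K - j, j, 0)) v = 0 := by
  unfold conv
  apply finsum_eq_zero_of_forall_eq_zero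
  intro u
  by_cases h0 : c u = 0
  · rw [h0, zero_mul]
  · obtain ⟨hu1, hu2⟩ := hcsupp u h0
    have h2 : orbitSum (K - j, j, 0) (v - u) = 0 := by
      unfold orbitSum
      rw [if_neg]
      intro hcon
      have hS := (orbit_iff K j 0 _).mp hcon
      have hueq : u = ((0 : ℤ), (0 : ℤ), u.2.2) := by
        rcases u with ⟨a, b, t⟩
        simp only at hu1 hu2
        rw [hu1, hu2]
      rw [hueq] at hS
      exact h u.2.2 ((inS_shift K j u.2.2 v).mp hS)
    rw [h2, mul_zero]

end Conv
section Main

noncomputable def coeffF (K : ℕ) (f : ℤ × ℤ × ℤ → ℂ) (j : Fin (K + 1)) : ℤ × ℤ × ℤ → ℂ :=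
  fun v => if v.1 = 0 ∧ v.2.1 = 0 then f ((K : ℤ) - (j : ℤ), (j : ℤ), v.2.2) else 0

lemma coeffF_supp (K : ℕ) (f : ℤ × ℤ × ℤ → ℂ) (j : Fin (K + 1)) :
    ∀ u, coeffF K f j u ≠ 0 → u.1 = 0 ∧ u.2.1 = 0 := by
  intro u hu
  by_contra h
  exact hu (if_neg h)

lemma coeffF_inAW (K : ℕ) (f : ℤ × ℤ × ℤ → ℂ) (hf : InAW K f) (j : Fin (K + 1)) :
    InAW 0 (coeffF K f j) := by
  have hs0 : ∀ v, coeffF K f j (s0z v) = coeffF K f j v := by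
    rintro ⟨x, y, z⟩
    simp only [coeffF, s0z]
    by_cases h : x = 0 ∧ y = 0
    · obtain ⟨rfl, rfl⟩ := h
      norm_num
    · rw [if_neg h]; exact if_neg (by omega)
  have hs1 : ∀ v, coeffF K f j (s1z v) = coeffF K f j v := by
    rintro ⟨x, y, z⟩
    simp only [coeffF, s1z]
    by_cases h : x = 0 ∧ y = 0
    · obtain ⟨rfl, rfl⟩ := h
      norm_num
    · rw [if_neg h]; exact if_neg (by omega)
  refine ⟨?_, hs0, hs1⟩
  intro w hw
  have hfun : (fun v => coeffF K f j (w v)) = coeffF K f j :=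
    funext (wz_invariant hs0 hs1 hw)
  rw [hfun]
  constructor
  · intro v hv
    obtain ⟨h1, h2⟩ := coeffF_supp K f j v hv
    omega
  · intro N
    have hfinf : InCbar K f := InCbar_of_one hf.1
    apply Set.Finite.subset ((hfinf.2 N).image (fun u => ((0:ℤ), (0:ℤ), u.2.2)))
    rintro v ⟨hv, hN⟩
    obtain ⟨h1, h2⟩ := coeffF_supp K f j v hv
    rw [coeffF, if_pos ⟨h1, h2⟩] at hv
    refine ⟨((K : ℤ) - (j : ℤ), (j : ℤ), v.2.2), ⟨hv, ?_⟩, ?_⟩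
    · have hj0 : (0:ℤ) ≤ (j : ℤ) := Int.natCast_nonneg _
      simp only [rhoPair] at hN ⊢
      linarith [hN, h2]
    · rcases v with ⟨a, b, t⟩
      simp only at h1 h2
      rw [h1, h2]

lemma sum_conv_eval (K : ℕ) (cf : Fin (K + 1) → ℤ × ℤ × ℤ → ℂ)
    (hsupp : ∀ i, ∀ u, cf i u ≠ 0 → u.1 = 0 ∧ u.2.1 = 0)
    (i₀ : Fin (K + 1)) {l : ℤ} {v : ℤ × ℤ × ℤ} (h : inS (K : ℤ) ((i₀ : ℤ)) l v) :
    (∑ i : Fin (K + 1), conv (cf i) (orbitSum ((K : ℤ) - (i : ℤ), (i : ℤ), 0)) v)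
      = cf i₀ ((0:ℤ), (0:ℤ), l) := by
  have hb : ∀ i : Fin (K + 1), (0:ℤ) ≤ (i : ℤ) ∧ (i : ℤ) ≤ (K : ℤ) := by
    intro i
    have := i.isLt
    constructor
    · exact Int.natCast_nonneg _
    · exact_mod_cast Nat.lt_succ_iff.mp this
  rw [Finset.sum_eq_single_of_mem i₀ (Finset.mem_univ _)]
  · exact conv_eval_pos (hb i₀).1 (hb i₀).2 (hsupp i₀) h
  · intro i _ hne
    apply conv_eval_neg _ (hsupp i)
    intro l' hl'
    have huni := inS_unique (hb i).1 (hb i).2 (hb i₀).1 (hb i₀).2 hl' h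
    apply hne
    have : (i : ℤ) = (i₀ : ℤ) := huni.1
    have hval : (i : ℕ) = (i₀ : ℕ) := by exact_mod_cast this
    exact Fin.ext hval

end Main

/-- For `K ∈ ℕ`, the orbit sums `m_λ` for `λ ∈ P̄_K⁺ = {(K−n)ϖ₀ + nϖ₁ : 0 ≤ n ≤ K}`
(coordinates `(K−n, n, 0)`) form a basis of `A_K^W` over the field `A_0^W`:
every `f ∈ A_K^W` is uniquely `Σ_{n=0}^{K} cₙ ⋆ m_{λₙ}` with coefficients `cₙ ∈ A_0^W`. -/


theorem orbit_sums_basis (K : ℕ) (f : ℤ × ℤ × ℤ → ℂ) (hf : InAW K f) :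
    ∃! c : Fin (K + 1) → ℤ × ℤ × ℤ → ℂ,
      (∀ j, InAW 0 (c j)) ∧
      f = fun v => ∑ j : Fin (K + 1),
        conv (c j) (orbitSum ((K : ℤ) - (j : ℤ), (j : ℤ), 0)) v := by
  refine ⟨coeffF K f, ⟨coeffF_inAW K f hf, ?_⟩, ?_⟩
  · funext v
    show f v = ∑ j : Fin (K + 1),
      conv (coeffF K f j) (orbitSum ((K : ℤ) - (j : ℤ), (j : ℤ), 0)) v
    by_cases hlev : v.1 + v.2.1 = (K : ℤ)
    · by_cases hcls : ∃ j l : ℤ, 0 ≤ j ∧ j ≤ (K : ℤ) ∧ inS (K : ℤ) j l v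
      · obtain ⟨j₀, l, hj0, hjK, h⟩ := hcls
        have hKj : j₀.toNat < K + 1 := by omega
        set i₀ : Fin (K + 1) := ⟨j₀.toNat, hKj⟩ with hi₀
        have hival : ((i₀ : ℤ)) = j₀ := by
          show ((j₀.toNat : ℕ) : ℤ) = j₀
          exact Int.toNat_of_nonneg hj0
        have hsum := sum_conv_eval K (coeffF K f) (coeffF_supp K f) i₀
          (l := l) (by rw [hival]; exact h)
        rw [hsum]
        have e2 : coeffF K f i₀ ((0:ℤ), (0:ℤ), l)
            = f ((K : ℤ) - (i₀ : ℤ), (i₀ : ℤ), l) := if_pos ⟨rfl, rfl⟩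
        rw [e2, hival]
        obtain ⟨w, hw, hwv⟩ := (orbit_iff (K : ℤ) j₀ l v).mpr h
        rw [← hwv]
        exact wz_invariant hf.2.1 hf.2.2 hw _
      · have hK0 : (K : ℤ) = 0 := by
          by_contra hK
          have hKpos : 0 < (K : ℤ) := by omega
          exact hcls (classify hKpos v hlev)
        have hy : v.2.1 ≠ 0 := by
          intro hy0
          apply hcls
          refine ⟨0, v.2.2, le_refl 0, by omega, ?_⟩
          unfold inS
          exact ⟨0, Or.inl ⟨by linarith, by linarith, by linarith⟩⟩
        rw [hK0] at hf
        have hfv : f v = 0 := by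
          by_contra hne
          exact hy (support_axis hf hne).2
        rw [hfv]
        symm
        apply Finset.sum_eq_zero
        intro i _
        apply conv_eval_neg _ (coeffF_supp K f i)
        intro l hl
        have hKnat : K = 0 := by exact_mod_cast hK0
        have hi : ((i : ℤ)) = 0 := by
          have := i.isLt
          omega
        obtain ⟨m, hm | hm⟩ := hl <;>
        · have h21 := hm.2.1
          rw [hK0, hi] at h21
          simp at h21
          exact hy h21
    · have hfv : f v = 0 := by
        by_contra hne
        exact hlev ((InCbar_of_one hf.1).1 v hne)
      rw [hfv]
      symm
      apply Finset.sum_eq_zero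
      intro i _
      apply conv_eval_neg _ (coeffF_supp K f i)
      intro l hl
      exact hlev (inS_level hl)
  · rintro c' ⟨hc'AW, hc'sum⟩
    funext j v
    by_cases h : v.1 = 0 ∧ v.2.1 = 0
    · obtain ⟨h1, h2⟩ := h
      have hp : inS (K : ℤ) ((j : ℤ)) v.2.2 ((K : ℤ) - (j : ℤ), (j : ℤ), v.2.2) := by
        unfold inS
        exact ⟨0, Or.inl ⟨by ring, by ring, by ring⟩⟩
      have e1 : f ((K : ℤ) - (j : ℤ), (j : ℤ), v.2.2) = c' j ((0:ℤ), (0:ℤ), v.2.2) := by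
        rw [hc'sum]
        exact sum_conv_eval K c' (fun i u hu => support_axis (hc'AW i) hu) j hp
      have e2 : coeffF K f j ((0:ℤ), (0:ℤ), v.2.2)
          = f ((K : ℤ) - (j : ℤ), (j : ℤ), v.2.2) := if_pos ⟨rfl, rfl⟩
      have hv : v = ((0:ℤ), (0:ℤ), v.2.2) := by
        rcases v with ⟨a, b, t⟩
        simp only at h1 h2
        rw [h1, h2]
      rw [hv, e2]
      exact e1.symm ▸ rfl
    · have hz1 : c' j v = 0 := by
        by_contra hne
        exact h (support_axis (hc'AW j) hne)
      have hz2 : coeffF K f j v = 0 := if_neg h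
      rw [hz1, hz2]
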